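/- Fix distinct real numbers κ and ϰ and functions q, r: ℝ → ℂ. Suppose γ_κ, g_κ, h_κ and γ_ϰ, g_ϰ, h_ϰ are differentiable functions on ℝ satisfying, for λ ∈ {κ, ϰ}: γ_λ' = 2(q h_λ + r g_λ), g_λ' = 2λ g_λ + q(γ_λ + 1), h_λ' = -2λ h_λ + r(γ_λ + 1). Then 2(κ - ϰ)[g_κ h_ϰ - h_κ g_ϰ] = d/dx { g_κ h_ϰ + h_κ g_ϰ - (γ_κ + 1)(γ_ϰ + 1)/2 }. -/

import Mathlib

theorem green_function_commutation_identity (κ ϰ : ℝ) (hne : κ ≠ ϰ) (q r : ℝ → ℂ)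
    (γκ gκ hκ γϰ gϰ hϰ : ℝ → ℂ)
    (hγκ : ∀ x : ℝ, HasDerivAt γκ (2 * (q x * hκ x + r x * gκ x)) x)
    (hgκ : ∀ x : ℝ, HasDerivAt gκ (2 * (κ : ℂ) * gκ x + q x * (γκ x + 1)) x)
    (hhκ : ∀ x : ℝ, HasDerivAt hκ (-(2 * (κ : ℂ)) * hκ x + r x * (γκ x + 1)) x)
    (hγϰ : ∀ x : ℝ, HasDerivAt γϰ (2 * (q x * hϰ x + r x * gϰ x)) x)
    (hgϰ : ∀ x : ℝ, HasDerivAt gϰ (2 * (ϰ : ℂ) * gϰ x + q x * (γϰ x + 1)) x)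
    (hhϰ : ∀ x : ℝ, HasDerivAt hϰ (-(2 * (ϰ : ℂ)) * hϰ x + r x * (γϰ x + 1)) x) :
    ∀ x : ℝ, HasDerivAt
      (fun y => gκ y * hϰ y + hκ y * gϰ y - (γκ y + 1) * (γϰ y + 1) / 2)
      (2 * ((κ : ℂ) - (ϰ : ℂ)) * (gκ x * hϰ x - hκ x * gϰ x)) x := by
  intro x
  have h := (((hgκ x).mul (hhϰ x)).add ((hhκ x).mul (hgϰ x))).sub
    ((((hγκ x).add_const 1).mul ((hγϰ x).add_const 1)).div_const 2)
  convert h using 1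
  · rfl
  · rfl
  ring
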